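/- Let Λ ⊂ ℝ³ be the lattice generated by v₁ = (4+δ)e₁, v₂ = −(2+δ/2)e₁ + 2√3 e₂, v₃ = −(2+δ/2)e₁ + 2√3 e₃ (δ > 0), and let U = ⋃_{p∈Λ} B(p,1) be the union of closed unit balls centered at lattice points. For any l ∈ ℝ³, let R = [l₁, l₁+4+δ] × [l₂, l₂+2√3] × [l₃, l₃+2√3]. Then the Lebesgue measure (volume) of R ∩ U equals the volume of a unit ball, i.e., 4π/3. -/

import Mathlib

open Real Metric MeasureTheory


/-- The `i`-th standard basis vector of `ℝ³`. -/
noncomputable def e3 (i : Fin 3) : EuclideanSpace ℝ (Fin 3) := EuclideanSpace.single i 1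

/-- The generating vectors `v₁ = (4+δ)e₁`, `vᵢ = −(2+δ/2)e₁ + 2√3 eᵢ` for `i = 2,3`. -/
noncomputable def lamV (δ : ℝ) (i : Fin 3) : EuclideanSpace ℝ (Fin 3) :=
  if i = 0 then (4 + δ) • e3 0
  else (-(2 + δ / 2)) • e3 0 + (2 * Real.sqrt 3) • e3 i

/-- The lattice `Λ` generated by `v₁, v₂, v₃`. -/
noncomputable def latticeΛ (δ : ℝ) : Set (EuclideanSpace ℝ (Fin 3)) :=
  {p | ∃ a b c : ℤ, p = (a : ℝ) • lamV δ 0 + (b : ℝ) • lamV δ 1 + (c : ℝ) • lamV δ 2}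

/-! ### Auxiliary definitions and lemmas -/

/-- The lattice point associated to a triple of integers. -/
noncomputable def latF (δ : ℝ) (v : ℤ × ℤ × ℤ) : EuclideanSpace ℝ (Fin 3) :=
  (v.1 : ℝ) • lamV δ 0 + (v.2.1 : ℝ) • lamV δ 1 + (v.2.2 : ℝ) • lamV δ 2

lemma latticeΛ_eq_range (δ : ℝ) : latticeΛ δ = Set.range (latF δ) := by
  ext p
  constructor
  · rintro ⟨a, b, c, rfl⟩; exact ⟨(a, b, c), rfl⟩
  · rintro ⟨⟨a, b, c⟩, rfl⟩; exact ⟨a, b, c, rfl⟩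

lemma latF_apply0 (δ : ℝ) (v : ℤ × ℤ × ℤ) :
    latF δ v 0 = (4 + δ) * v.1 - (2 + δ / 2) * ((v.2.1 : ℝ) + (v.2.2 : ℝ)) := by
  simp [latF, lamV, e3, PiLp.add_apply, PiLp.smul_apply, EuclideanSpace.single_apply,
    show (1:Fin 3) ≠ 0 from by decide, show (2:Fin 3) ≠ 0 from by decide,
    show (0:Fin 3) ≠ 1 from by decide, show (0:Fin 3) ≠ 2 from by decide]
  ring

lemma latF_apply1 (δ : ℝ) (v : ℤ × ℤ × ℤ) :
    latF δ v 1 = 2 * Real.sqrt 3 * (v.2.1 : ℝ) := by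
  simp [latF, lamV, e3, PiLp.add_apply, PiLp.smul_apply, EuclideanSpace.single_apply,
    show (1:Fin 3) ≠ 0 from by decide, show (2:Fin 3) ≠ 0 from by decide,
    show (1:Fin 3) ≠ 2 from by decide]
  ring

lemma latF_apply2 (δ : ℝ) (v : ℤ × ℤ × ℤ) :
    latF δ v 2 = 2 * Real.sqrt 3 * (v.2.2 : ℝ) := by
  simp [latF, lamV, e3, PiLp.add_apply, PiLp.smul_apply, EuclideanSpace.single_apply,
    show (1:Fin 3) ≠ 0 from by decide, show (2:Fin 3) ≠ 0 from by decide,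
    show (2:Fin 3) ≠ 1 from by decide]
  ring

lemma abs_coord_le_dist (x y : EuclideanSpace ℝ (Fin 3)) (i : Fin 3) :
    |x i - y i| ≤ dist x y := by
  rw [EuclideanSpace.dist_eq, show |x i - y i| = dist (x i) (y i) from (Real.dist_eq _ _).symm,
    Real.le_sqrt dist_nonneg]
  · exact Finset.single_le_sum (f := fun j => dist (x j) (y j) ^ 2)
      (fun j _ => sq_nonneg _) (Finset.mem_univ i)
  · positivity

lemma one_lt_sqrt3 : (1 : ℝ) < Real.sqrt 3 := by
  have h : Real.sqrt 1 < Real.sqrt 3 := Real.sqrt_lt_sqrt (by norm_num) (by norm_num)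
  simpa using h

lemma latF_dist (δ : ℝ) (hδ : 0 < δ) {v w : ℤ × ℤ × ℤ} (h : v ≠ w) :
    2 < dist (latF δ v) (latF δ w) := by
  obtain ⟨a, b, c⟩ := v
  obtain ⟨a', b', c'⟩ := w
  have hs := one_lt_sqrt3
  by_cases hc : c = c'
  · by_cases hb : b = b'
    · have ha : a ≠ a' := by
        intro haa; exact h (by simp [haa, hb, hc])
      refine lt_of_lt_of_le ?_ (abs_coord_le_dist _ _ 0)
      rw [latF_apply0, latF_apply0]
      have h1 : (1 : ℝ) ≤ |(a : ℝ) - (a' : ℝ)| := by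
        have : (1 : ℤ) ≤ |a - a'| := Int.one_le_abs (sub_ne_zero.mpr ha)
        exact_mod_cast this
      have heq : (4 + δ) * (a : ℝ) - (2 + δ / 2) * ((b : ℝ) + (c : ℝ)) -
          ((4 + δ) * (a' : ℝ) - (2 + δ / 2) * ((b' : ℝ) + (c' : ℝ)))
          = (4 + δ) * ((a : ℝ) - (a' : ℝ)) := by
        subst hb; subst hc; ring
      rw [heq, abs_mul, abs_of_pos (by linarith : (0:ℝ) < 4 + δ)]
      nlinarith [abs_nonneg ((a : ℝ) - (a' : ℝ))]
    · refine lt_of_lt_of_le ?_ (abs_coord_le_dist _ _ 1)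
      rw [latF_apply1, latF_apply1]
      have h1 : (1 : ℝ) ≤ |(b : ℝ) - (b' : ℝ)| := by
        have : (1 : ℤ) ≤ |b - b'| := Int.one_le_abs (sub_ne_zero.mpr hb)
        exact_mod_cast this
      have heq : 2 * Real.sqrt 3 * (b : ℝ) - 2 * Real.sqrt 3 * (b' : ℝ)
          = 2 * Real.sqrt 3 * ((b : ℝ) - (b' : ℝ)) := by ring
      rw [heq, abs_mul, abs_of_pos (by nlinarith : (0:ℝ) < 2 * Real.sqrt 3)]
      nlinarith [abs_nonneg ((b : ℝ) - (b' : ℝ))]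
  · refine lt_of_lt_of_le ?_ (abs_coord_le_dist _ _ 2)
    rw [latF_apply2, latF_apply2]
    have h1 : (1 : ℝ) ≤ |(c : ℝ) - (c' : ℝ)| := by
      have : (1 : ℤ) ≤ |c - c'| := Int.one_le_abs (sub_ne_zero.mpr hc)
      exact_mod_cast this
    have heq : 2 * Real.sqrt 3 * (c : ℝ) - 2 * Real.sqrt 3 * (c' : ℝ)
        = 2 * Real.sqrt 3 * ((c : ℝ) - (c' : ℝ)) := by ring
    rw [heq, abs_mul, abs_of_pos (by nlinarith : (0:ℝ) < 2 * Real.sqrt 3)]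
    nlinarith [abs_nonneg ((c : ℝ) - (c' : ℝ))]

/-- Each point of space lies in exactly one lattice translate of the half-open box. -/
lemma tile (δ : ℝ) (hδ : 0 < δ) (l : Fin 3 → ℝ) (x : EuclideanSpace ℝ (Fin 3)) :
    ∃! v : ℤ × ℤ × ℤ,
      (latF δ v + x) 0 ∈ Set.Ico (l 0) (l 0 + 4 + δ) ∧
      (latF δ v + x) 1 ∈ Set.Ico (l 1) (l 1 + 2 * Real.sqrt 3) ∧
      (latF δ v + x) 2 ∈ Set.Ico (l 2) (l 2 + 2 * Real.sqrt 3) := by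
  have hs3 : (0 : ℝ) < 2 * Real.sqrt 3 := by nlinarith [one_lt_sqrt3]
  have hp : (0 : ℝ) < 4 + δ := by linarith
  have key1 : ∀ v : ℤ × ℤ × ℤ, (latF δ v + x) 1 = x 1 + v.2.1 • (2 * Real.sqrt 3) := by
    intro v
    show latF δ v 1 + x 1 = _
    rw [latF_apply1, zsmul_eq_mul]; ring
  have key2 : ∀ v : ℤ × ℤ × ℤ, (latF δ v + x) 2 = x 2 + v.2.2 • (2 * Real.sqrt 3) := by
    intro v
    show latF δ v 2 + x 2 = _
    rw [latF_apply2, zsmul_eq_mul]; ring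
  have key0 : ∀ v : ℤ × ℤ × ℤ, (latF δ v + x) 0 =
      (x 0 - (2 + δ / 2) * ((v.2.1 : ℝ) + (v.2.2 : ℝ))) + v.1 • (4 + δ) := by
    intro v
    show latF δ v 0 + x 0 = _
    rw [latF_apply0, zsmul_eq_mul]; ring
  have e0 : l 0 + 4 + δ = l 0 + (4 + δ) := by ring
  obtain ⟨c0, hc0, hc0u⟩ := existsUnique_add_zsmul_mem_Ico hs3 (x 2) (l 2)
  obtain ⟨b0, hb0, hb0u⟩ := existsUnique_add_zsmul_mem_Ico hs3 (x 1) (l 1)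
  obtain ⟨a0, ha0, ha0u⟩ :=
    existsUnique_add_zsmul_mem_Ico hp (x 0 - (2 + δ / 2) * ((b0 : ℝ) + (c0 : ℝ))) (l 0)
  refine ⟨(a0, b0, c0), ⟨?_, ?_, ?_⟩, ?_⟩
  · rw [key0, e0]; exact ha0
  · rw [key1]; exact hb0
  · rw [key2]; exact hc0
  · rintro ⟨a, b, c⟩ ⟨h0, h1, h2⟩
    rw [key2] at h2
    have hc : c = c0 := hc0u c h2
    rw [key1] at h1
    have hb : b = b0 := hb0u b h1
    rw [key0, e0] at h0
    subst hb; subst hc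
    have ha : a = a0 := ha0u a h0
    simp [ha]

/-- The half-open box. -/
def boxIco (δ : ℝ) (l : Fin 3 → ℝ) : Set (EuclideanSpace ℝ (Fin 3)) :=
  {x | x 0 ∈ Set.Ico (l 0) (l 0 + 4 + δ) ∧
       x 1 ∈ Set.Ico (l 1) (l 1 + 2 * Real.sqrt 3) ∧
       x 2 ∈ Set.Ico (l 2) (l 2 + 2 * Real.sqrt 3)}

lemma measurable_coord (i : Fin 3) : Measurable (fun x : EuclideanSpace ℝ (Fin 3) => x i) :=
  (EuclideanSpace.proj (𝕜 := ℝ) i).continuous.measurable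

lemma boxIco_measurable (δ : ℝ) (l : Fin 3 → ℝ) : MeasurableSet (boxIco δ l) := by
  have : boxIco δ l =
      (fun x : EuclideanSpace ℝ (Fin 3) => x 0) ⁻¹' Set.Ico (l 0) (l 0 + 4 + δ) ∩
      ((fun x : EuclideanSpace ℝ (Fin 3) => x 1) ⁻¹' Set.Ico (l 1) (l 1 + 2 * Real.sqrt 3) ∩
       (fun x : EuclideanSpace ℝ (Fin 3) => x 2) ⁻¹' Set.Ico (l 2) (l 2 + 2 * Real.sqrt 3)) := rfl
  rw [this]
  exact (measurable_coord 0 measurableSet_Ico).inter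
    ((measurable_coord 1 measurableSet_Ico).inter (measurable_coord 2 measurableSet_Ico))

lemma hyperplane_null (i : Fin 3) (c : ℝ) :
    volume {x : EuclideanSpace ℝ (Fin 3) | x i = c} = 0 := by
  have hms : NullMeasurableSet {y : Fin 3 → ℝ | y i = c} volume := by
    have hm : MeasurableSet ((fun y : Fin 3 → ℝ => y i) ⁻¹' {c}) :=
      (measurable_pi_apply i) (measurableSet_singleton c)
    exact hm.nullMeasurableSet
  have h := (EuclideanSpace.volume_preserving_symm_measurableEquiv_toLp (Fin 3)).measure_preimage hms
  have heq : (⇑(MeasurableEquiv.toLp 2 (Fin 3 → ℝ)).symm) ⁻¹' {y : Fin 3 → ℝ | y i = c}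
      = {x : EuclideanSpace ℝ (Fin 3) | x i = c} := rfl
  rw [heq] at h
  rw [h]
  have hset : {y : Fin 3 → ℝ | y i = c}
      = Set.pi Set.univ (fun j => if j = i then {c} else Set.univ) := by
    ext y
    constructor
    · intro hy j _
      by_cases hj : j = i
      · subst hj; simpa using hy
      · simp [hj]
    · intro hy
      have := hy i (Set.mem_univ i)
      simpa using this
  rw [hset, volume_pi_pi]
  refine Finset.prod_eq_zero (Finset.mem_univ i) ?_
  simp

lemma ball_vol :
    volume (closedBall (0 : EuclideanSpace ℝ (Fin 3)) 1) = ENNReal.ofReal (4 * π / 3) := by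
  rw [EuclideanSpace.volume_closedBall]
  rw [Fintype.card_fin]
  rw [ENNReal.ofReal_one, one_pow, one_mul]
  congr 1
  have hsp : Real.sqrt π ≠ 0 := ne_of_gt (Real.sqrt_pos.mpr Real.pi_pos)
  have hG : Real.Gamma ((3 : ℝ) / 2 + 1) = 3 / 4 * Real.sqrt π := by
    rw [Real.Gamma_add_one (by norm_num)]
    rw [show (3 : ℝ) / 2 = 1 / 2 + 1 by norm_num, Real.Gamma_add_one (by norm_num),
      Real.Gamma_one_half_eq]
    ring
  rw [show ((3 : ℕ) : ℝ) = 3 by norm_num, hG, pow_succ, Real.sq_sqrt Real.pi_pos.le]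
  field_simp

/-- for `U` the union of closed unit balls centered at the points of `Λ`
and `R` the box `[l₁, l₁+4+δ] × [l₂, l₂+2√3] × [l₃, l₃+2√3]`, the volume of `R ∩ U`
equals the volume of a unit ball, `4π/3`. -/
theorem volume_box_inter_union_balls (δ : ℝ) (hδ : 0 < δ) (l : Fin 3 → ℝ) :
    volume ({x : EuclideanSpace ℝ (Fin 3) |
        x 0 ∈ Set.Icc (l 0) (l 0 + 4 + δ) ∧
        x 1 ∈ Set.Icc (l 1) (l 1 + 2 * Real.sqrt 3) ∧
        x 2 ∈ Set.Icc (l 2) (l 2 + 2 * Real.sqrt 3)} ∩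
      ⋃ p ∈ latticeΛ δ, closedBall p 1) = ENNReal.ofReal (4 * Real.pi / 3) := by
  classical
  set boxC : Set (EuclideanSpace ℝ (Fin 3)) := {x : EuclideanSpace ℝ (Fin 3) |
        x 0 ∈ Set.Icc (l 0) (l 0 + 4 + δ) ∧
        x 1 ∈ Set.Icc (l 1) (l 1 + 2 * Real.sqrt 3) ∧
        x 2 ∈ Set.Icc (l 2) (l 2 + 2 * Real.sqrt 3)} with hboxC
  set R : Set (EuclideanSpace ℝ (Fin 3)) := boxIco δ l with hR
  -- rewrite the union over the lattice as an indexed union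
  have hU : (⋃ p ∈ latticeΛ δ, closedBall p 1) = ⋃ v : ℤ × ℤ × ℤ, closedBall (latF δ v) 1 := by
    rw [latticeΛ_eq_range, Set.biUnion_range]
  rw [hU]
  set U : Set (EuclideanSpace ℝ (Fin 3)) := ⋃ v : ℤ × ℤ × ℤ, closedBall (latF δ v) 1 with hUdef
  -- Step 1: replace `boxC` by the half-open box `R`
  set N : Set (EuclideanSpace ℝ (Fin 3)) :=
    {x | x 0 = l 0 + 4 + δ} ∪ ({x | x 1 = l 1 + 2 * Real.sqrt 3} ∪
      {x | x 2 = l 2 + 2 * Real.sqrt 3}) with hNdef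
  have hN : volume N = 0 := by
    rw [hNdef]
    refine measure_union_null (hyperplane_null 0 _) (measure_union_null ?_ ?_)
    · exact hyperplane_null 1 _
    · exact hyperplane_null 2 _
  have hsub : boxC ⊆ R ∪ N := by
    rintro x ⟨⟨h0l, h0u⟩, ⟨h1l, h1u⟩, ⟨h2l, h2u⟩⟩
    by_cases e0 : x 0 = l 0 + 4 + δ
    · exact Or.inr (Or.inl e0)
    by_cases e1 : x 1 = l 1 + 2 * Real.sqrt 3
    · exact Or.inr (Or.inr (Or.inl e1))
    by_cases e2 : x 2 = l 2 + 2 * Real.sqrt 3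
    · exact Or.inr (Or.inr (Or.inr e2))
    exact Or.inl ⟨⟨h0l, lt_of_le_of_ne h0u e0⟩, ⟨h1l, lt_of_le_of_ne h1u e1⟩,
      ⟨h2l, lt_of_le_of_ne h2u e2⟩⟩
  have hRsub : R ⊆ boxC := by
    rintro x ⟨⟨h0l, h0u⟩, ⟨h1l, h1u⟩, ⟨h2l, h2u⟩⟩
    exact ⟨⟨h0l, le_of_lt h0u⟩, ⟨h1l, le_of_lt h1u⟩, ⟨h2l, le_of_lt h2u⟩⟩
  have hstep1 : volume (boxC ∩ U) = volume (R ∩ U) := by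
    apply le_antisymm
    · calc volume (boxC ∩ U) ≤ volume ((R ∩ U) ∪ N) := by
            refine measure_mono ?_
            rintro x ⟨hx, hu⟩
            rcases hsub hx with h | h
            · exact Or.inl ⟨h, hu⟩
            · exact Or.inr h
        _ ≤ volume (R ∩ U) + volume N := measure_union_le _ _
        _ = volume (R ∩ U) := by rw [hN, add_zero]
    · exact measure_mono (Set.inter_subset_inter_left _ hRsub)
  rw [hstep1]
  -- Step 2: split the union into disjoint pieces
  have hRmeas : MeasurableSet R := boxIco_measurable δ l
  have hdisj : Pairwise (Function.onFun Disjoint fun v : ℤ × ℤ × ℤ => R ∩ closedBall (latF δ v) 1) := by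
    intro v w hvw
    have hd : Disjoint (closedBall (latF δ v) 1) (closedBall (latF δ w) 1) := by
      apply closedBall_disjoint_closedBall
      have := latF_dist δ hδ hvw
      linarith
    exact hd.mono Set.inter_subset_right Set.inter_subset_right
  rw [hUdef, Set.inter_iUnion,
    measure_iUnion hdisj (fun v => hRmeas.inter measurableSet_closedBall)]
  -- Step 3: translate each piece
  set S : ℤ × ℤ × ℤ → Set (EuclideanSpace ℝ (Fin 3)) :=
    fun v => (fun x => latF δ v + x) ⁻¹' R with hSdef
  have hterm : ∀ v : ℤ × ℤ × ℤ,
      volume (R ∩ closedBall (latF δ v) 1) = volume (S v ∩ closedBall 0 1) := by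
    intro v
    have hball : (fun x : EuclideanSpace ℝ (Fin 3) => latF δ v + x) ⁻¹'
        closedBall (latF δ v) 1 = closedBall (0 : EuclideanSpace ℝ (Fin 3)) 1 := by
      ext z
      simp [Metric.mem_closedBall, dist_eq_norm]
    have := measure_preimage_add volume (latF δ v) (R ∩ closedBall (latF δ v) 1)
    rw [Set.preimage_inter, hball] at this
    exact this.symm
  rw [tsum_congr hterm]
  -- Step 4: the translated pieces tile the unit ball
  have hmeas2 : ∀ v : ℤ × ℤ × ℤ, MeasurableSet (S v ∩ closedBall 0 1) := by
    intro v
    exact ((continuous_const.add continuous_id).measurable hRmeas).inter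
      measurableSet_closedBall
  have hdisj2 : Pairwise (Function.onFun Disjoint fun v : ℤ × ℤ × ℤ => S v ∩ closedBall 0 1) := by
    intro v w hvw
    rw [Function.onFun, Set.disjoint_left]
    rintro z ⟨hz1, -⟩ ⟨hz2, -⟩
    obtain ⟨u, -, huniq⟩ := tile δ hδ l z
    exact hvw ((huniq v hz1).trans (huniq w hz2).symm)
  rw [← measure_iUnion hdisj2 hmeas2]
  have hcover : (⋃ v : ℤ × ℤ × ℤ, S v ∩ closedBall 0 1)
      = closedBall (0 : EuclideanSpace ℝ (Fin 3)) 1 := by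
    ext z
    simp only [Set.mem_iUnion]
    constructor
    · rintro ⟨v, -, hz⟩; exact hz
    · intro hz
      obtain ⟨v, hv, -⟩ := tile δ hδ l z
      exact ⟨v, hv, hz⟩
  rw [hcover, ball_vol]
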